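/- arXiv:2306.05288 — 5 statements merged into one kernel-verified Lean document; each statement's English description precedes it below -/
import Mathlib

section
/- Let U, P1, and P2 be reflexive real Banach spaces, and let b1 : U × P1 → ℝ and b2 : U × P2 → ℝ be bounded bilinear forms. Define Z := {v ∈ U : b2(v, p2) = 0 for all p2 ∈ P2}. Then the following are equivalent: (1) there exists c > 0 such that for all (p1, p2) ∈ P1 × P2, sup over nonzero v ∈ U of (b1(v, p1) + b2(v, p2)) / ‖v‖_U ≥ c (‖p1‖_{P1} + ‖p2‖_{P2}); (2) there exists c > 0 such that for all p1 ∈ P1, sup over nonzero v ∈ Z of b1(v, p1) / ‖v‖_U ≥ c ‖p1‖_{P1}, and for all p2 ∈ P2, sup over nonzero v ∈ U of b2(v, p2) / ‖v‖_U ≥ c ‖p2‖_{P2}. -/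
open NormedSpace Metric Filter Finset Function
/-- Sup of `g v / ‖v‖` over nonzero `v` equals the operator norm. -/
lemma iSup_div_norm_eq_opNorm {E : Type*} [NormedAddCommGroup E] [NormedSpace ℝ E]
    (g : E →L[ℝ] ℝ) : (⨆ v : {v : E // v ≠ 0}, g v.1 / ‖v.1‖) = ‖g‖ := by
  rcases isEmpty_or_nonempty {v : E // v ≠ 0} with h | h
  · have hz : ∀ v : E, v = 0 := fun v => by
      by_contra hv; exact h.false ⟨v, hv⟩
    have hg : g = 0 := by ext v; rw [hz v]; simp
    rw [hg, iSup, Set.range_eq_empty, Real.sSup_empty]; simp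
  · have bdd : BddAbove (Set.range fun v : {v : E // v ≠ 0} => g v.1 / ‖v.1‖) := by
      refine ⟨‖g‖, ?_⟩
      rintro _ ⟨v, rfl⟩
      rw [div_le_iff₀ (norm_pos_iff.2 v.2)]
      exact (le_abs_self _).trans (g.le_opNorm v.1)
    have hle : ∀ v : E, (hv : v ≠ 0) → g v / ‖v‖ ≤ ⨆ v : {v : E // v ≠ 0}, g v.1 / ‖v.1‖ :=
      fun v hv => le_ciSup bdd ⟨v, hv⟩
    apply le_antisymm
    · refine Real.iSup_le (fun v => ?_) (norm_nonneg g)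
      rw [div_le_iff₀ (norm_pos_iff.2 v.2)]
      exact (le_abs_self _).trans (g.le_opNorm v.1)
    · have hS : 0 ≤ ⨆ v : {v : E // v ≠ 0}, g v.1 / ‖v.1‖ := by
        obtain ⟨v⟩ := h
        have h1 := hle v.1 v.2
        have h2 := hle (-v.1) (neg_ne_zero.2 v.2)
        rw [map_neg, norm_neg] at h2
        have h3 := add_le_add h1 h2
        rw [← add_div] at h3
        simp at h3
        linarith
      refine g.opNorm_le_bound hS (fun v => ?_)
      rcases eq_or_ne v 0 with rfl | hv
      · simp
      · have h1 := hle v hv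
        have h2 := hle (-v) (neg_ne_zero.2 hv)
        rw [map_neg, norm_neg] at h2
        have hvpos : (0:ℝ) < ‖v‖ := norm_pos_iff.2 hv
        rw [Real.norm_eq_abs, abs_le]
        rw [div_le_iff₀ hvpos] at h1 h2
        constructor <;> nlinarith
/-- From approximate preimages with halving error, get exact preimages (Banach iteration). -/
lemma exists_preimage_of_approx {E F : Type*} [NormedAddCommGroup E] [NormedSpace ℝ E]
    [CompleteSpace E] [NormedAddCommGroup F] [NormedSpace ℝ F]
    (f : E →L[ℝ] F) {C : ℝ} (C0 : 0 ≤ C)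
    (hC : ∀ y : F, ∃ x, dist y (f x) ≤ 1 / 2 * ‖y‖ ∧ ‖x‖ ≤ C * ‖y‖) :
    ∀ y : F, ∃ x, f x = y ∧ ‖x‖ ≤ (2 * C + 1) * ‖y‖ := by
  choose g hg using hC
  let h y := y - f (g y)
  have hle : ∀ y, ‖h y‖ ≤ 1 / 2 * ‖y‖ := by
    intro y
    rw [← dist_eq_norm]
    exact (hg y).1
  intro y
  have hnle : ∀ n : ℕ, ‖h^[n] y‖ ≤ (1 / 2) ^ n * ‖y‖ := by
    intro n
    induction n with
    | zero => simp only [one_div, one_mul, iterate_zero_apply, pow_zero, le_rfl]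
    | succ n IH =>
      rw [iterate_succ']
      apply le_trans (hle _) _
      rw [pow_succ', mul_assoc]
      gcongr
  let u n := g (h^[n] y)
  have ule : ∀ n, ‖u n‖ ≤ (1 / 2) ^ n * (C * ‖y‖) := fun n ↦ by
    apply le_trans (hg _).2
    calc
      C * ‖h^[n] y‖ ≤ C * ((1 / 2) ^ n * ‖y‖) := mul_le_mul_of_nonneg_left (hnle n) C0
      _ = (1 / 2) ^ n * (C * ‖y‖) := by ring
  have sNu : Summable fun n => ‖u n‖ := by
    refine .of_nonneg_of_le (fun n => norm_nonneg _) ule ?_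
    exact Summable.mul_right _ (summable_geometric_of_lt_one (by norm_num) (by norm_num))
  have su : Summable u := sNu.of_norm
  let x := tsum u
  have x_ineq : ‖x‖ ≤ (2 * C + 1) * ‖y‖ :=
    calc
      ‖x‖ ≤ ∑' n, ‖u n‖ := norm_tsum_le_tsum_norm sNu
      _ ≤ ∑' n, (1 / 2) ^ n * (C * ‖y‖) :=
        Summable.tsum_le_tsum ule sNu (Summable.mul_right _ summable_geometric_two)
      _ = (∑' n, (1 / 2) ^ n) * (C * ‖y‖) := tsum_mul_right
      _ = 2 * C * ‖y‖ := by rw [tsum_geometric_two, mul_assoc]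
      _ ≤ 2 * C * ‖y‖ + ‖y‖ := le_add_of_nonneg_right (norm_nonneg y)
      _ = (2 * C + 1) * ‖y‖ := by ring
  have fsumeq : ∀ n : ℕ, f (∑ i ∈ Finset.range n, u i) = y - h^[n] y := by
    intro n
    induction n with
    | zero => simp [f.map_zero]
    | succ n IH => rw [sum_range_succ, f.map_add, IH, iterate_succ_apply', sub_add]
  have : Tendsto (fun n => ∑ i ∈ Finset.range n, u i) atTop (nhds x) := su.hasSum.tendsto_sum_nat
  have L₁ : Tendsto (fun n => f (∑ i ∈ Finset.range n, u i)) atTop (nhds (f x)) :=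
    (f.continuous.tendsto _).comp this
  simp only [fsumeq] at L₁
  have L₂ : Tendsto (fun n => y - h^[n] y) atTop (nhds (y - 0)) := by
    refine tendsto_const_nhds.sub ?_
    rw [tendsto_iff_norm_sub_tendsto_zero]
    simp only [sub_zero]
    refine squeeze_zero (fun _ => norm_nonneg _) hnle ?_
    rw [← zero_mul ‖y‖]
    refine (_root_.tendsto_pow_atTop_nhds_zero_of_lt_one ?_ ?_).mul tendsto_const_nhds <;> norm_num
  have feq : f x = y - 0 := tendsto_nhds_unique L₁ L₂
  rw [sub_zero] at feq
  exact ⟨x, feq, x_ineq⟩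
/-- Inf-sup condition + reflexivity of `P2` gives surjectivity of `b2 : U → P2*`
with norm control. -/
lemma surj_of_infsup {U P2 : Type*} [NormedAddCommGroup U] [NormedSpace ℝ U]
    [CompleteSpace U] [NormedAddCommGroup P2] [NormedSpace ℝ P2]
    (hP2refl : Function.Surjective ⇑(NormedSpace.inclusionInDoubleDual ℝ P2))
    (b2 : U →L[ℝ] P2 →L[ℝ] ℝ) {c : ℝ} (hc : 0 < c)
    (h : ∀ p2 : P2, c * ‖p2‖ ≤ ‖b2.flip p2‖) :
    ∃ C > 0, ∀ φ : P2 →L[ℝ] ℝ, ∃ u, b2 u = φ ∧ ‖u‖ ≤ C * ‖φ‖ := by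
  -- step 1: density of the image of the unit ball
  have hdens : ∀ φ : P2 →L[ℝ] ℝ, ‖φ‖ ≤ c → φ ∈ closure (⇑b2 '' closedBall (0:U) 1) := by
    intro φ hφ
    by_contra hmem
    have hconv : Convex ℝ (closure (⇑b2 '' closedBall (0:U) 1)) :=
      ((convex_closedBall (0:U) 1).linear_image (b2 : U →ₗ[ℝ] P2 →L[ℝ] ℝ)).closure
    obtain ⟨ψ, u, hlt, hgt⟩ :=
      geometric_hahn_banach_closed_point hconv isClosed_closure hmem
    have h0 : (0:ℝ) < u := by
      have h0mem : (0 : P2 →L[ℝ] ℝ) ∈ closure (⇑b2 '' closedBall (0:U) 1) :=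
        subset_closure ⟨0, by simp, by simp⟩
      have := hlt 0 h0mem
      simpa using this
    obtain ⟨p2, hp2⟩ := hP2refl ψ
    have hψ : ∀ g : P2 →L[ℝ] ℝ, ψ g = g p2 := by
      intro g
      rw [← hp2]
      exact NormedSpace.dual_def ℝ P2 p2 g
    have hball : ∀ v : U, ‖v‖ ≤ 1 → |b2 v p2| ≤ u := by
      intro v hv
      have h1 : b2 v p2 < u := by
        rw [← hψ]
        exact hlt _ (subset_closure ⟨v, by simpa using hv, rfl⟩)
      have h2 : -(b2 v p2) < u := by
        have : b2 (-v) p2 < u := by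
          rw [← hψ]
          exact hlt _ (subset_closure ⟨-v, by simpa using hv, rfl⟩)
        simpa using this
      rw [abs_le]; constructor <;> linarith
    have hnorm : ‖b2.flip p2‖ ≤ u := by
      refine ContinuousLinearMap.opNorm_le_bound _ h0.le (fun v => ?_)
      rcases eq_or_ne v 0 with rfl | hv
      · simp [h0.le]
      · have hvpos : (0:ℝ) < ‖v‖ := norm_pos_iff.2 hv
        have := hball (‖v‖⁻¹ • v) (by
          rw [norm_smul, norm_inv, norm_norm, inv_mul_cancel₀ hvpos.ne']
          )
        rw [map_smul] at this
        simp only [ContinuousLinearMap.coe_smul', Pi.smul_apply, smul_eq_mul] at this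
        rw [abs_mul, abs_inv, abs_norm] at this
        rw [inv_mul_le_iff₀ hvpos] at this
        simpa [ContinuousLinearMap.flip_apply, Real.norm_eq_abs, mul_comm] using this
    have hup : u < φ p2 := by rw [← hψ]; exact hgt
    have hfin : φ p2 ≤ c * ‖p2‖ := by
      calc φ p2 ≤ |φ p2| := le_abs_self _
        _ ≤ ‖φ‖ * ‖p2‖ := φ.le_opNorm p2
        _ ≤ c * ‖p2‖ := by nlinarith [norm_nonneg p2]
    have := h p2
    linarith
  -- step 2: approximate preimages
  have happrox : ∀ φ : P2 →L[ℝ] ℝ, ∃ x, dist φ (b2 x) ≤ 1/2 * ‖φ‖ ∧ ‖x‖ ≤ (2/c) * ‖φ‖ := by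
    intro φ
    rcases eq_or_ne φ 0 with rfl | hφ
    · exact ⟨0, by simp, by simp⟩
    · have hφpos : 0 < ‖φ‖ := norm_pos_iff.2 hφ
      set ψ := (c / ‖φ‖) • φ with hψdef
      have hψnorm : ‖ψ‖ = c := by
        rw [hψdef, norm_smul (α := ℝ) (β := P2 →L[ℝ] ℝ) (c / ‖φ‖) φ,
          Real.norm_eq_abs, abs_of_pos (div_pos hc hφpos)]
        field_simp
      have hmem := hdens ψ hψnorm.le
      rw [Metric.mem_closure_iff] at hmem
      obtain ⟨z, hz, hdist⟩ := hmem (c/2) (by positivity)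
      obtain ⟨v, hv, rfl⟩ := hz
      rw [mem_closedBall_zero_iff] at hv
      have hφψ : φ = (‖φ‖/c) • ψ := by
        rw [hψdef, smul_smul]
        field_simp
        rw [one_smul]
      refine ⟨(‖φ‖/c) • v, ?_, ?_⟩
      · calc dist φ (b2 ((‖φ‖/c) • v))
            = dist ((‖φ‖/c) • ψ) ((‖φ‖/c) • b2 v) := by rw [← hφψ, map_smul]
          _ = ‖(‖φ‖/c)‖ * dist ψ (b2 v) := dist_smul₀ (‖φ‖/c) ψ (b2 v)
          _ ≤ (‖φ‖/c) * (c/2) := by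
              rw [Real.norm_eq_abs, abs_of_pos (div_pos hφpos hc)]
              exact mul_le_mul_of_nonneg_left hdist.le (div_pos hφpos hc).le
          _ = 1/2 * ‖φ‖ := by field_simp
      · rw [norm_smul (α := ℝ) (β := U) (‖φ‖/c) v, Real.norm_eq_abs,
          abs_of_pos (div_pos hφpos hc)]
        have h1 : ‖φ‖/c * ‖v‖ ≤ ‖φ‖/c * 1 := by
          exact mul_le_mul_of_nonneg_left hv (div_pos hφpos hc).le
        have h2 : ‖φ‖/c * 1 ≤ 2/c * ‖φ‖ := by
          rw [mul_one, div_mul_eq_mul_div]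
          gcongr
          linarith
        linarith
  -- step 3: iterate
  have final := exists_preimage_of_approx b2 (by positivity : (0:ℝ) ≤ 2/c) happrox
  exact ⟨2*(2/c)+1, by positivity, final⟩

/-- Every functional vanishing on `ker b2` is represented by some `p2`. -/
lemma exists_rep {U P2 : Type*} [NormedAddCommGroup U] [NormedSpace ℝ U]
    [NormedAddCommGroup P2] [NormedSpace ℝ P2]
    (hP2refl : Function.Surjective ⇑(NormedSpace.inclusionInDoubleDual ℝ P2))
    (b2 : U →L[ℝ] P2 →L[ℝ] ℝ) {C : ℝ}
    (hsurj : ∀ φ : P2 →L[ℝ] ℝ, ∃ u, b2 u = φ ∧ ‖u‖ ≤ C * ‖φ‖)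
    (f : U →L[ℝ] ℝ) (hf : ∀ v : U, (∀ p2, b2 v p2 = 0) → f v = 0) :
    ∃ p2 : P2, ∀ v, b2 v p2 = f v := by
  choose g hg hgn using hsurj
  have key : ∀ (u : U) (φ : P2 →L[ℝ] ℝ), b2 u = φ → f u = f (g φ) := by
    intro u φ hu
    have hker : ∀ p2, b2 (u - g φ) p2 = 0 := by
      intro p2
      rw [map_sub, hu, hg φ, sub_self]
      rfl
    have := hf _ hker
    rw [map_sub, sub_eq_zero] at this
    exact this
  let ℓ : (P2 →L[ℝ] ℝ) →ₗ[ℝ] ℝ :=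
    { toFun := fun φ => f (g φ)
      map_add' := by
        intro φ φ'
        have h := key (g φ + g φ') (φ + φ') (by rw [map_add, hg, hg])
        show f (g (φ + φ')) = f (g φ) + f (g φ')
        rw [← h, map_add]
      map_smul' := by
        intro r φ
        have h := key (r • g φ) (r • φ) (by rw [map_smul, hg])
        show f (g (r • φ)) = r • f (g φ)
        rw [← h, map_smul] }
  have hbound : ∀ φ : P2 →L[ℝ] ℝ, ‖ℓ φ‖ ≤ (C * ‖f‖) * ‖φ‖ := by
    intro φ
    calc ‖f (g φ)‖ ≤ ‖f‖ * ‖g φ‖ := f.le_opNorm _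
      _ ≤ ‖f‖ * (C * ‖φ‖) := mul_le_mul_of_nonneg_left (hgn φ) (norm_nonneg f)
      _ = (C * ‖f‖) * ‖φ‖ := by ring
  let ℓc : (P2 →L[ℝ] ℝ) →L[ℝ] ℝ := ℓ.mkContinuous (C * ‖f‖) hbound
  obtain ⟨p2, hp2⟩ := hP2refl ℓc
  refine ⟨p2, fun v => ?_⟩
  have h1 : b2 v p2 = ℓc (b2 v) := by
    rw [← hp2]
    exact (NormedSpace.dual_def ℝ P2 p2 (b2 v)).symm
  rw [h1]
  exact (key v (b2 v) rfl).symm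

/-- Split inf-sup stability equivalence (Howell–Walkington, Theorem 3.1):
for reflexive real Banach spaces `U`, `P1`, `P2` and bounded bilinear forms
`b1 : U × P1 → ℝ`, `b2 : U × P2 → ℝ`, with
`Z := {v ∈ U | b2 v p2 = 0 for all p2}`, the combined inf-sup condition is
equivalent to the pair of separate inf-sup conditions. -/
theorem split_inf_sup_equivalence
    {U P1 P2 : Type*}
    [NormedAddCommGroup U] [NormedSpace ℝ U] [CompleteSpace U]
    [NormedAddCommGroup P1] [NormedSpace ℝ P1] [CompleteSpace P1]
    [NormedAddCommGroup P2] [NormedSpace ℝ P2] [CompleteSpace P2]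
    (hUrefl : Function.Surjective ⇑(NormedSpace.inclusionInDoubleDual ℝ U))
    (hP1refl : Function.Surjective ⇑(NormedSpace.inclusionInDoubleDual ℝ P1))
    (hP2refl : Function.Surjective ⇑(NormedSpace.inclusionInDoubleDual ℝ P2))
    (b1 : U →L[ℝ] P1 →L[ℝ] ℝ) (b2 : U →L[ℝ] P2 →L[ℝ] ℝ) :
    (∃ c > (0 : ℝ), ∀ (p1 : P1) (p2 : P2),
        c * (‖p1‖ + ‖p2‖) ≤ ⨆ v : {v : U // v ≠ 0}, (b1 v.1 p1 + b2 v.1 p2) / ‖v.1‖)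
    ↔
    (∃ c > (0 : ℝ),
      (∀ p1 : P1,
        c * ‖p1‖ ≤ ⨆ v : {v : U // (∀ p2 : P2, b2 v p2 = 0) ∧ v ≠ 0}, b1 v.1 p1 / ‖v.1‖) ∧
      (∀ p2 : P2,
        c * ‖p2‖ ≤ ⨆ v : {v : U // v ≠ 0}, b2 v.1 p2 / ‖v.1‖)) := by
  classical
  -- the kernel of `b2` as a submodule
  set K : Submodule ℝ U :=
    { carrier := {v : U | ∀ p2 : P2, b2 v p2 = 0}
      add_mem' := by
        intro a b ha hb p2
        rw [map_add]
        simp [ha p2, hb p2]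
      zero_mem' := by intro p2; simp
      smul_mem' := by
        intro r v hv p2
        rw [map_smul]
        simp [hv p2] } with hKdef
  have hKmem : ∀ v : U, v ∈ K ↔ ∀ p2 : P2, b2 v p2 = 0 := fun v => Iff.rfl
  -- rewrite the three suprema as operator norms
  have hA : ∀ (p1 : P1) (p2 : P2),
      (⨆ v : {v : U // v ≠ 0}, (b1 v.1 p1 + b2 v.1 p2) / ‖v.1‖)
        = ‖b1.flip p1 + b2.flip p2‖ := by
    intro p1 p2
    rw [← iSup_div_norm_eq_opNorm (b1.flip p1 + b2.flip p2)]
    exact iSup_congr fun v => by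
      simp [ContinuousLinearMap.add_apply, ContinuousLinearMap.flip_apply]
  have hB : ∀ p2 : P2,
      (⨆ v : {v : U // v ≠ 0}, b2 v.1 p2 / ‖v.1‖) = ‖b2.flip p2‖ := by
    intro p2
    rw [← iSup_div_norm_eq_opNorm (b2.flip p2)]
    exact iSup_congr fun v => by simp [ContinuousLinearMap.flip_apply]
  have hZ : ∀ p1 : P1,
      (⨆ v : {v : U // (∀ p2 : P2, b2 v p2 = 0) ∧ v ≠ 0}, b1 v.1 p1 / ‖v.1‖)
        = ‖(b1.flip p1).comp K.subtypeL‖ := by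
    intro p1
    rw [← iSup_div_norm_eq_opNorm ((b1.flip p1).comp K.subtypeL)]
    rw [iSup, iSup]
    congr 1
    ext x
    constructor
    · rintro ⟨⟨v, hv1, hv2⟩, rfl⟩
      exact ⟨⟨⟨v, hv1⟩, fun h => hv2 (congrArg Subtype.val h)⟩, rfl⟩
    · rintro ⟨⟨⟨v, hv1⟩, hz⟩, rfl⟩
      exact ⟨⟨v, hv1, fun h => hz (Subtype.ext h)⟩, rfl⟩
  constructor
  · rintro ⟨c, hc, H⟩
    have H' : ∀ (p1 : P1) (p2 : P2),
        c * (‖p1‖ + ‖p2‖) ≤ ‖b1.flip p1 + b2.flip p2‖ := by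
      intro p1 p2
      rw [← hA p1 p2]; exact H p1 p2
    have h2b : ∀ p2 : P2, c * ‖p2‖ ≤ ‖b2.flip p2‖ := by
      intro p2
      have := H' 0 p2
      simpa using this
    obtain ⟨C, hC, hsurj⟩ := surj_of_infsup hP2refl b2 hc h2b
    refine ⟨c, hc, fun p1 => ?_, fun p2 => by rw [hB p2]; exact h2b p2⟩
    rw [hZ p1]
    obtain ⟨F, hF, hFnorm⟩ := exists_extension_norm_eq K ((b1.flip p1).comp K.subtypeL)
    have hvanish : ∀ v : U, (∀ p2 : P2, b2 v p2 = 0) → (b1.flip p1 - F) v = 0 := by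
      intro v hv
      have h1 : F v = b1 v p1 := hF ⟨v, hv⟩
      simp [ContinuousLinearMap.sub_apply, ContinuousLinearMap.flip_apply, h1]
    obtain ⟨p2', hp2'⟩ := exists_rep hP2refl b2 hsurj (b1.flip p1 - F) hvanish
    have hfeq : b2.flip p2' = b1.flip p1 - F := by
      ext v
      simpa [ContinuousLinearMap.flip_apply] using hp2' v
    have hineq := H' p1 (-p2')
    rw [map_neg, hfeq] at hineq
    have heq : b1.flip p1 + -(b1.flip p1 - F) = F := by abel
    rw [heq, hFnorm] at hineq
    have : c * ‖p1‖ ≤ c * (‖p1‖ + ‖-p2'‖) := by nlinarith [norm_nonneg (-p2')]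
    exact this.trans hineq
  · rintro ⟨c, hc, h1, h2⟩
    have h1' : ∀ p1 : P1, c * ‖p1‖ ≤ ‖(b1.flip p1).comp K.subtypeL‖ := by
      intro p1; rw [← hZ p1]; exact h1 p1
    have h2' : ∀ p2 : P2, c * ‖p2‖ ≤ ‖b2.flip p2‖ := by
      intro p2; rw [← hB p2]; exact h2 p2
    set M := ‖b1.flip‖ with hMdef
    have hM : 0 ≤ M := hMdef ▸ ContinuousLinearMap.opNorm_nonneg _
    refine ⟨c * c / (2 * c + M + 1), by positivity, fun p1 p2 => ?_⟩
    rw [hA p1 p2]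
    set F := b1.flip p1 + b2.flip p2 with hFdef
    have hFnn : (0:ℝ) ≤ ‖F‖ := norm_nonneg _
    have e1 : c * ‖p1‖ ≤ ‖F‖ := by
      have hcompeq : (b1.flip p1).comp K.subtypeL = F.comp K.subtypeL := by
        ext z
        have hz := z.2
        rw [hKmem] at hz
        simp [hFdef, ContinuousLinearMap.add_apply, ContinuousLinearMap.flip_apply, hz p2]
      have hcomp : ‖F.comp K.subtypeL‖ ≤ ‖F‖ := by
        refine ContinuousLinearMap.opNorm_le_bound _ hFnn (fun z => ?_)
        exact F.le_opNorm z.1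
      calc c * ‖p1‖ ≤ ‖(b1.flip p1).comp K.subtypeL‖ := h1' p1
        _ = ‖F.comp K.subtypeL‖ := by rw [hcompeq]
        _ ≤ ‖F‖ := hcomp
    have e2 : c * ‖p2‖ ≤ ‖F‖ + M * ‖p1‖ := by
      have hsub : b2.flip p2 = F - b1.flip p1 := by rw [hFdef]; abel
      calc c * ‖p2‖ ≤ ‖b2.flip p2‖ := h2' p2
        _ = ‖F - b1.flip p1‖ := by rw [hsub]
        _ ≤ ‖F‖ + ‖b1.flip p1‖ := norm_sub_le _ _
        _ ≤ ‖F‖ + M * ‖p1‖ := by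
            have := (b1.flip).le_opNorm p1
            linarith
    rw [div_mul_eq_mul_div, div_le_iff₀ (by positivity)]
    nlinarith [mul_le_mul_of_nonneg_left e1 hc.le, mul_le_mul_of_nonneg_left e2 hc.le,
      mul_le_mul_of_nonneg_left e1 hM, norm_nonneg p1, norm_nonneg p2, hFnn, hc.le]
end

section
/- Let Ω̂ and Ω be open subsets of ℝ^d and let T : Ω̂ → Ω be a C² diffeomorphism with Jacobian matrix J(x̂) := DT(x̂) (which is invertible at every x̂ ∈ Ω̂). Let v̂ : Ω̂ → ℝ^d be continuously differentiable and define the Piola push-forward v : Ω → ℝ^d by v(T(x̂)) := det(J(x̂))⁻¹ J(x̂) v̂(x̂) for all x̂ ∈ Ω̂. Then v is differentiable and for every x̂ ∈ Ω̂, (div v)(T(x̂)) = det(J(x̂))⁻¹ (div v̂)(x̂). -/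
/-- The divergence of a vector field `w : ℝ^d → ℝ^d` at `x`:
`div w (x) = ∑ i ∂wᵢ/∂xᵢ (x)`, the trace of the Fréchet derivative. -/
noncomputable def pdiv {d : ℕ} (w : (Fin d → ℝ) → (Fin d → ℝ)) (x : Fin d → ℝ) : ℝ :=
  ∑ i, fderiv ℝ w x (Pi.single i 1) i

/-- The determinant as a continuous multilinear map in the rows. -/
noncomputable def detCM (d : ℕ) :
    ContinuousMultilinearMap ℝ (fun _ : Fin d => (Fin d → ℝ)) ℝ :=
  MultilinearMap.mkContinuous
    (Matrix.detRowAlternating (R := ℝ) (n := Fin d)).toMultilinearMap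
    (Nat.factorial d) (fun m => by
      have h1 : (Matrix.detRowAlternating (R := ℝ) (n := Fin d)).toMultilinearMap m
          = Matrix.det (Matrix.of m) := rfl
      rw [h1, Matrix.det_apply]
      calc ‖∑ σ : Equiv.Perm (Fin d), Equiv.Perm.sign σ • ∏ i, Matrix.of m (σ i) i‖
          ≤ ∑ σ : Equiv.Perm (Fin d), ‖Equiv.Perm.sign σ • ∏ i, Matrix.of m (σ i) i‖ :=
            norm_sum_le _ _
        _ ≤ ∑ _σ : Equiv.Perm (Fin d), ∏ i, ‖m i‖ := by
            refine Finset.sum_le_sum fun σ _ => ?_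
            have h2 : ‖Equiv.Perm.sign σ • ∏ i, Matrix.of m (σ i) i‖
                = ‖∏ i, m (σ i) i‖ := by
              rcases Int.units_eq_one_or (Equiv.Perm.sign σ) with h | h <;>
                simp [h, Units.smul_def]
            rw [h2]
            calc ‖∏ i, m (σ i) i‖ ≤ ∏ i, ‖m (σ i) i‖ := by
                  rw [Real.norm_eq_abs, Finset.abs_prod]
                  exact le_of_eq (Finset.prod_congr rfl fun i _ => (Real.norm_eq_abs _).symm)
              _ ≤ ∏ i, ‖m (σ i)‖ := by
                  refine Finset.prod_le_prod (fun i _ => norm_nonneg _)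
                    (fun i _ => norm_le_pi_norm _ _)
              _ = ∏ i, ‖m i‖ := Equiv.prod_comp σ (fun i => ‖m i‖)
        _ = (Nat.factorial d) * ∏ i, ‖m i‖ := by
            rw [Finset.sum_const, nsmul_eq_mul]
            simp [Fintype.card_perm])

lemma detCM_apply {d : ℕ} (m : Fin d → (Fin d → ℝ)) :
    detCM d m = Matrix.det (Matrix.of m) := rfl

/-- Jacobi's formula, algebraic part. -/
lemma jacobi_sum {d : ℕ} (A B H : Matrix (Fin d) (Fin d) ℝ) (hBA : B * A = 1) :
    ∑ i, (A.updateRow i (H i)).det = A.det * (H * B).trace := by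
  have hrow : ∀ i, H i = ∑ k, ((H * B) i k) • A k := by
    intro i; funext j
    have h1 : ((H * B) * A) i j = H i j := by rw [Matrix.mul_assoc, hBA, Matrix.mul_one]
    rw [← h1]
    simp [Matrix.mul_apply, Finset.sum_apply]
  calc ∑ i, (A.updateRow i (H i)).det
      = ∑ i, ((H * B) i i) • A.det := by
        refine Finset.sum_congr rfl fun i _ => ?_
        rw [hrow i, Matrix.det_updateRow_sum]
    _ = A.det * (H * B).trace := by
        rw [Matrix.trace]
        simp [Matrix.diag, Finset.mul_sum, Finset.sum_mul, mul_comm]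

/-- The matrix of a continuous linear map on `Fin d → ℝ`. -/
noncomputable def clmMat {d : ℕ} (f : (Fin d → ℝ) →L[ℝ] (Fin d → ℝ)) :
    Matrix (Fin d) (Fin d) ℝ :=
  Matrix.of fun i j => f (Pi.single j 1) i

lemma clmMat_eq {d : ℕ} (f : (Fin d → ℝ) →L[ℝ] (Fin d → ℝ)) :
    clmMat f = LinearMap.toMatrix' (f : (Fin d → ℝ) →ₗ[ℝ] (Fin d → ℝ)) := by
  ext i j
  rw [LinearMap.toMatrix'_apply]
  have : (fun j' => if j' = j then (1:ℝ) else 0) = Pi.single j 1 := by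
    funext j'; simp [Pi.single_apply]
  rfl

lemma clmMat_det {d : ℕ} (f : (Fin d → ℝ) →L[ℝ] (Fin d → ℝ)) :
    (clmMat f).det = f.det := by
  rw [clmMat_eq]
  exact LinearMap.det_toMatrix' _

/-- Expansion of a linear map application in the standard basis. -/
lemma clm_expand {d : ℕ} (f : (Fin d → ℝ) →L[ℝ] (Fin d → ℝ)) (y : Fin d → ℝ) :
    f y = ∑ l, y l • f (Pi.single l 1) := by
  conv_lhs => rw [← Finset.univ_sum_single y]
  rw [map_sum]
  refine Finset.sum_congr rfl fun l _ => ?_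
  have : (Pi.single l (y l) : Fin d → ℝ) = y l • (Pi.single l 1 : Fin d → ℝ) := by
    funext j
    rcases eq_or_ne j l with rfl | h
    · simp
    · simp [Pi.single_eq_of_ne h]
  rw [this, map_smul]

lemma clmMat_mul_trace {d : ℕ} (f g : (Fin d → ℝ) →L[ℝ] (Fin d → ℝ)) :
    (clmMat f * clmMat g).trace = ∑ i, f (g (Pi.single i 1)) i := by
  rw [Matrix.trace]
  refine Finset.sum_congr rfl fun i _ => ?_
  rw [Matrix.diag_apply, Matrix.mul_apply]
  rw [clm_expand f (g (Pi.single i 1))]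
  simp only [Finset.sum_apply, Pi.smul_apply, smul_eq_mul, clmMat, Matrix.of_apply]
  exact Finset.sum_congr rfl fun k _ => mul_comm _ _

lemma clm_trace_comm {d : ℕ} (f g : (Fin d → ℝ) →L[ℝ] (Fin d → ℝ)) :
    ∑ i, f (g (Pi.single i 1)) i = ∑ i, g (f (Pi.single i 1)) i := by
  rw [← clmMat_mul_trace, ← clmMat_mul_trace, Matrix.trace_mul_comm]

theorem piola_key {d : ℕ}
    (Ωhat : Set (Fin d → ℝ)) (hΩhat : IsOpen Ωhat)
    (T : (Fin d → ℝ) → (Fin d → ℝ)) (hT : ContDiffOn ℝ 2 T Ωhat)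
    (hJ : ∀ xh ∈ Ωhat, (fderiv ℝ T xh).det ≠ 0)
    (vhat : (Fin d → ℝ) → (Fin d → ℝ)) (hvhat : ContDiffOn ℝ 1 vhat Ωhat)
    (v : (Fin d → ℝ) → (Fin d → ℝ))
    (hv : ∀ xh ∈ Ωhat, v (T xh) = ((fderiv ℝ T xh).det)⁻¹ • fderiv ℝ T xh (vhat xh))
    (xh₀ : Fin d → ℝ) (hx : xh₀ ∈ Ωhat) :
    DifferentiableAt ℝ v (T xh₀) ∧
      pdiv v (T xh₀) = ((fderiv ℝ T xh₀).det)⁻¹ * pdiv vhat xh₀ := by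
  classical
  have hnhds : Ωhat ∈ nhds xh₀ := hΩhat.mem_nhds hx
  have hTat : ContDiffAt ℝ 2 T xh₀ := hT.contDiffAt hnhds
  -- the Jacobian at xh₀ as a continuous linear equivalence
  have hdet : (fderiv ℝ T xh₀).det ≠ 0 := hJ xh₀ hx
  let JE : (Fin d → ℝ) ≃L[ℝ] (Fin d → ℝ) :=
    (LinearMap.equivOfDetNeZero ((fderiv ℝ T xh₀) : (Fin d → ℝ) →ₗ[ℝ] (Fin d → ℝ))
      hdet).toContinuousLinearEquiv
  have hJE : (JE : (Fin d → ℝ) →L[ℝ] (Fin d → ℝ)) = fderiv ℝ T xh₀ := by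
    exact ContinuousLinearMap.ext fun x => rfl
  have hstrict : HasStrictFDerivAt T (JE : (Fin d → ℝ) →L[ℝ] (Fin d → ℝ)) xh₀ := by
    rw [hJE]
    exact hTat.hasStrictFDerivAt (by norm_num)
  -- the local inverse S
  set S := hstrict.localInverse T _ xh₀ with hSdef
  have hS : HasStrictFDerivAt S (JE.symm : (Fin d → ℝ) →L[ℝ] (Fin d → ℝ)) (T xh₀) :=
    hstrict.to_localInverse
  have hSx : S (T xh₀) = xh₀ := hstrict.localInverse_apply_image
  have hev1 : ∀ᶠ y in nhds (T xh₀), T (S y) = y := hstrict.eventually_right_inverse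
  have hev2 : ∀ᶠ y in nhds (T xh₀), S y ∈ Ωhat := by
    have hc : ContinuousAt S (T xh₀) := hS.continuousAt
    exact hc (by rw [hSx]; exact hnhds)
  -- v agrees with F ∘ S near T xh₀
  set F : (Fin d → ℝ) → (Fin d → ℝ) :=
    fun xh => ((fderiv ℝ T xh).det)⁻¹ • fderiv ℝ T xh (vhat xh) with hFdef
  have hvF : v =ᶠ[nhds (T xh₀)] (F ∘ S) := by
    filter_upwards [hev1, hev2] with y h1 h2
    have := hv (S y) h2
    rw [h1] at this
    exact this
  -- derivative data
  have hWd : DifferentiableAt ℝ (fderiv ℝ T) xh₀ :=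
    (hTat.fderiv_right (m := 1) (by norm_num)).differentiableAt one_ne_zero
  have hW : HasFDerivAt (fderiv ℝ T) (fderiv ℝ (fderiv ℝ T) xh₀) xh₀ := hWd.hasFDerivAt
  set W := fderiv ℝ (fderiv ℝ T) xh₀ with hWdef
  have hsymm : ∀ a b, W a b = W b a := fun a b =>
    (hTat.isSymmSndFDerivAt (by simp [minSmoothness_of_isRCLikeNormedField])).eq a b
  have hBd : DifferentiableAt ℝ vhat xh₀ :=
    (hvhat.contDiffAt hnhds).differentiableAt one_ne_zero
  set B := fderiv ℝ vhat xh₀ with hBdef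
  have hB : HasFDerivAt vhat B xh₀ := hBd.hasFDerivAt
  -- derivative of the Jacobian determinant
  let P : Fin d → (((Fin d → ℝ) →L[ℝ] (Fin d → ℝ)) →L[ℝ] (Fin d → ℝ)) := fun i =>
    ContinuousLinearMap.pi fun j =>
      (ContinuousLinearMap.proj i).comp
        (ContinuousLinearMap.apply ℝ (Fin d → ℝ) (Pi.single j 1))
  have hg : ∀ i, HasFDerivAt (fun x => (fun k => fderiv ℝ T x (Pi.single k 1) i))
      ((P i).comp W) xh₀ := fun i => ((P i).hasFDerivAt).comp xh₀ hW
  have hmul := HasFDerivAt.multilinear_comp (f := detCM d) hg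
  have hBA : clmMat ((JE.symm : (Fin d → ℝ) →L[ℝ] (Fin d → ℝ)))
      * clmMat (fderiv ℝ T xh₀) = 1 := by
    ext i j
    rw [Matrix.mul_apply]
    simp only [clmMat, Matrix.of_apply]
    have hexp := clm_expand (JE.symm : (Fin d → ℝ) →L[ℝ] (Fin d → ℝ))
      (fderiv ℝ T xh₀ (Pi.single j 1))
    have h1 : ∑ k, (JE.symm : (Fin d → ℝ) →L[ℝ] (Fin d → ℝ)) (Pi.single k 1) i
          * fderiv ℝ T xh₀ (Pi.single j 1) k
        = ((JE.symm : (Fin d → ℝ) →L[ℝ] (Fin d → ℝ)) (fderiv ℝ T xh₀ (Pi.single j 1))) i := by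
      rw [hexp]
      simp only [Finset.sum_apply, Pi.smul_apply, smul_eq_mul]
      exact Finset.sum_congr rfl fun k _ => mul_comm _ _
    rw [h1, ← hJE]
    simp only [ContinuousLinearEquiv.coe_coe, ContinuousLinearEquiv.symm_apply_apply]
    rw [Matrix.one_apply, Pi.single_apply]
  obtain ⟨φ', hφ, hφval⟩ : ∃ φ' : (Fin d → ℝ) →L[ℝ] ℝ,
      HasFDerivAt (fun x => (fderiv ℝ T x).det) φ' xh₀ ∧
      ∀ h, φ' h = (fderiv ℝ T xh₀).det * ∑ k, W h (JE.symm (Pi.single k 1)) k := by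
    refine ⟨∑ i, ((detCM d).toContinuousLinearMap
        (fun j => (fun k => fderiv ℝ T xh₀ (Pi.single k 1) j)) i).comp ((P i).comp W),
      ?_, fun h => ?_⟩
    · have heq : (fun x => (fderiv ℝ T x).det)
          = fun x => detCM d (fun i => (fun k => fderiv ℝ T x (Pi.single k 1) i)) := by
        funext x
        rw [← clmMat_det (fderiv ℝ T x)]
        rfl
      rw [heq]
      exact hmul
    · have h0 : (∑ i, ((detCM d).toContinuousLinearMap
            (fun j => (fun k => fderiv ℝ T xh₀ (Pi.single k 1) j)) i).comp ((P i).comp W)) h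
          = ∑ i, ((clmMat (fderiv ℝ T xh₀)).updateRow i ((clmMat (W h)) i)).det := by
        rw [ContinuousLinearMap.sum_apply]
        refine Finset.sum_congr rfl fun i _ => ?_
        rfl
      rw [h0, jacobi_sum _ _ _ hBA, clmMat_det, clmMat_mul_trace]
      rfl
  -- derivative of F = det⁻¹ • (J vhat)
  have hφinv : HasFDerivAt (fun x => ((fderiv ℝ T x).det)⁻¹)
      ((-(ContinuousLinearMap.mulLeftRight ℝ ℝ ((fderiv ℝ T xh₀).det)⁻¹
        ((fderiv ℝ T xh₀).det)⁻¹)).comp φ') xh₀ :=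
    (hasFDerivAt_inv' hdet).comp xh₀ hφ
  have hG : HasFDerivAt (fun x => fderiv ℝ T x (vhat x))
      ((fderiv ℝ T xh₀).comp B + W.flip (vhat xh₀)) xh₀ := hW.clm_apply hB
  have hF : HasFDerivAt F
      (((fderiv ℝ T xh₀).det)⁻¹ • ((fderiv ℝ T xh₀).comp B + W.flip (vhat xh₀))
        + ((-(ContinuousLinearMap.mulLeftRight ℝ ℝ ((fderiv ℝ T xh₀).det)⁻¹
            ((fderiv ℝ T xh₀).det)⁻¹)).comp φ').smulRight (fderiv ℝ T xh₀ (vhat xh₀))) xh₀ :=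
    hφinv.smul hG
  have hF' : HasFDerivAt F
      (((fderiv ℝ T xh₀).det)⁻¹ • ((fderiv ℝ T xh₀).comp B + W.flip (vhat xh₀))
        + ((-(ContinuousLinearMap.mulLeftRight ℝ ℝ ((fderiv ℝ T xh₀).det)⁻¹
            ((fderiv ℝ T xh₀).det)⁻¹)).comp φ').smulRight (fderiv ℝ T xh₀ (vhat xh₀)))
      (S (T xh₀)) := by rw [hSx]; exact hF
  have hFS : HasFDerivAt (F ∘ S)
      ((((fderiv ℝ T xh₀).det)⁻¹ • ((fderiv ℝ T xh₀).comp B + W.flip (vhat xh₀))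
        + ((-(ContinuousLinearMap.mulLeftRight ℝ ℝ ((fderiv ℝ T xh₀).det)⁻¹
            ((fderiv ℝ T xh₀).det)⁻¹)).comp φ').smulRight (fderiv ℝ T xh₀ (vhat xh₀))).comp
        (JE.symm : (Fin d → ℝ) →L[ℝ] (Fin d → ℝ))) (T xh₀) :=
    hF'.comp (T xh₀) hS.hasFDerivAt
  have hvd : HasFDerivAt v
      ((((fderiv ℝ T xh₀).det)⁻¹ • ((fderiv ℝ T xh₀).comp B + W.flip (vhat xh₀))
        + ((-(ContinuousLinearMap.mulLeftRight ℝ ℝ ((fderiv ℝ T xh₀).det)⁻¹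
            ((fderiv ℝ T xh₀).det)⁻¹)).comp φ').smulRight (fderiv ℝ T xh₀ (vhat xh₀))).comp
        (JE.symm : (Fin d → ℝ) →L[ℝ] (Fin d → ℝ))) (T xh₀) :=
    hFS.congr_of_eventuallyEq hvF
  refine ⟨hvd.differentiableAt, ?_⟩
  have hfder := hvd.fderiv
  -- the pointwise value of the derivative applied to basis vectors
  have hsum : ∀ i : Fin d,
      fderiv ℝ v (T xh₀) (Pi.single i 1) i
      = ((fderiv ℝ T xh₀).det)⁻¹ * (fderiv ℝ T xh₀ (B (JE.symm (Pi.single i 1)))) i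
        + (((fderiv ℝ T xh₀).det)⁻¹ * (W (JE.symm (Pi.single i 1)) (vhat xh₀)) i
          - ((fderiv ℝ T xh₀).det)⁻¹
            * (∑ k, W (JE.symm (Pi.single i 1)) (JE.symm (Pi.single k 1)) k)
            * (fderiv ℝ T xh₀ (vhat xh₀)) i) := by
    intro i
    rw [hfder]
    simp only [ContinuousLinearMap.coe_comp', Function.comp_apply,
      ContinuousLinearMap.add_apply, ContinuousLinearMap.coe_smul', Pi.smul_apply,
      ContinuousLinearMap.smulRight_apply, ContinuousLinearMap.neg_apply,
      ContinuousLinearMap.mulLeftRight_apply, ContinuousLinearMap.flip_apply,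
      ContinuousLinearEquiv.coe_coe, ContinuousLinearMap.comp_apply,
      Pi.add_apply, smul_eq_mul]
    rw [hφval]
    field_simp
    ring
  -- first piece: the divergence of vhat
  have hA1 : ∑ i, (fderiv ℝ T xh₀ (B (JE.symm (Pi.single i 1)))) i
      = ∑ i, B (Pi.single i 1) i := by
    have h := clm_trace_comm (fderiv ℝ T xh₀)
      (B.comp (JE.symm : (Fin d → ℝ) →L[ℝ] (Fin d → ℝ)))
    simp only [ContinuousLinearMap.coe_comp', Function.comp_apply,
      ContinuousLinearEquiv.coe_coe] at h
    rw [h]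
    refine Finset.sum_congr rfl fun i _ => ?_
    rw [← hJE]
    simp
  -- second piece: the Piola cancellation
  have hA2 : ∑ i, (W (JE.symm (Pi.single i 1)) (vhat xh₀)) i
      = ∑ i, (∑ k, W (JE.symm (Pi.single i 1)) (JE.symm (Pi.single k 1)) k)
          * (fderiv ℝ T xh₀ (vhat xh₀)) i := by
    have hv0 : vhat xh₀ = (JE.symm : (Fin d → ℝ) →L[ℝ] (Fin d → ℝ))
        (fderiv ℝ T xh₀ (vhat xh₀)) := by
      rw [← hJE]; simp
    calc ∑ i, (W (JE.symm (Pi.single i 1)) (vhat xh₀)) i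
        = ∑ i, ∑ l, (fderiv ℝ T xh₀ (vhat xh₀)) l
            * (W (JE.symm (Pi.single i 1)) (JE.symm (Pi.single l 1))) i := by
          refine Finset.sum_congr rfl fun i _ => ?_
          conv_lhs => rw [hv0, clm_expand (JE.symm : (Fin d → ℝ) →L[ℝ] (Fin d → ℝ))
            (fderiv ℝ T xh₀ (vhat xh₀))]
          rw [map_sum]
          simp [ContinuousLinearEquiv.coe_coe, Finset.sum_apply]
      _ = ∑ i, (∑ k, W (JE.symm (Pi.single i 1)) (JE.symm (Pi.single k 1)) k)
            * (fderiv ℝ T xh₀ (vhat xh₀)) i := by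
          rw [Finset.sum_comm]
          refine Finset.sum_congr rfl fun i _ => ?_
          rw [Finset.sum_mul]
          refine Finset.sum_congr rfl fun k _ => ?_
          rw [hsymm (JE.symm (Pi.single k 1)) (JE.symm (Pi.single i 1))]
          ring
  -- put everything together
  have hps : pdiv v (T xh₀) = ∑ i, fderiv ℝ v (T xh₀) (Pi.single i 1) i := rfl
  have hpv : pdiv vhat xh₀ = ∑ i, B (Pi.single i 1) i := rfl
  rw [hps, hpv]
  rw [Finset.sum_congr rfl fun i _ => hsum i]
  rw [Finset.sum_add_distrib, Finset.sum_sub_distrib]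
  rw [← Finset.mul_sum, ← Finset.mul_sum, hA1, hA2]
  have : ∑ i, ((fderiv ℝ T xh₀).det)⁻¹
      * (∑ k, W (JE.symm (Pi.single i 1)) (JE.symm (Pi.single k 1)) k)
      * (fderiv ℝ T xh₀ (vhat xh₀)) i
      = ((fderiv ℝ T xh₀).det)⁻¹ * ∑ i, (∑ k, W (JE.symm (Pi.single i 1))
          (JE.symm (Pi.single k 1)) k) * (fderiv ℝ T xh₀ (vhat xh₀)) i := by
    rw [Finset.mul_sum]
    exact Finset.sum_congr rfl fun i _ => by ring
  rw [this]
  ring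

/-- The contravariant Piola transform preserves divergence, pointwise form:
if `T : Ω̂ → Ω` is a `C²` diffeomorphism with everywhere invertible Jacobian
`J = DT`, `v̂` is `C¹` on `Ω̂`, and `v (T xh) = det(J xh)⁻¹ • (J xh) (v̂ xh)`, then `v`
is differentiable on `Ω` and `(div v)(T xh) = det(J xh)⁻¹ * (div v̂)(xh)` on `Ω̂`. -/
theorem piola_preserves_divergence_pointwise {d : ℕ}
    (Ωhat Ω : Set (Fin d → ℝ)) (hΩhat : IsOpen Ωhat) (hΩ : IsOpen Ω)
    (T : (Fin d → ℝ) → (Fin d → ℝ))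
    (hT : ContDiffOn ℝ 2 T Ωhat)
    (hTbij : Set.BijOn T Ωhat Ω)
    (hJ : ∀ xh ∈ Ωhat, (fderiv ℝ T xh).det ≠ 0)
    (vhat : (Fin d → ℝ) → (Fin d → ℝ))
    (hvhat : ContDiffOn ℝ 1 vhat Ωhat)
    (v : (Fin d → ℝ) → (Fin d → ℝ))
    (hv : ∀ xh ∈ Ωhat,
      v (T xh) = ((fderiv ℝ T xh).det)⁻¹ • fderiv ℝ T xh (vhat xh)) :
    (∀ x ∈ Ω, DifferentiableAt ℝ v x) ∧
    (∀ xh ∈ Ωhat, pdiv v (T xh) = ((fderiv ℝ T xh).det)⁻¹ * pdiv vhat xh) := by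
  constructor
  · intro x hxΩ
    obtain ⟨xh, hxh, rfl⟩ := hTbij.surjOn hxΩ
    exact (piola_key Ωhat hΩhat T hT hJ vhat hvhat v hv xh hxh).1
  · intro xh hxh
    exact (piola_key Ωhat hΩhat T hT hJ vhat hvhat v hv xh hxh).2
end

section
/- Let K̂ ⊂ ℝ^d be a bounded open set and let T be a C² map on an open set containing the closure of K̂ that restricts to a diffeomorphism of K̂ onto an open set K ⊂ ℝ^d, with det(DT(x̂)) > 0 for all x̂ in the closure of K̂. Let v̂ be a continuously differentiable vector field on an open set containing the closure of K̂, and let q̂ : K̂ → ℝ be continuous and bounded. Define v : K → ℝ^d by v(T(x̂)) := det(DT(x̂))⁻¹ DT(x̂) v̂(x̂) and q : K → ℝ by q(T(x̂)) := q̂(x̂). Then ∫_K (div v)(x) q(x) dx = ∫_{K̂} (div v̂)(x̂) q̂(x̂) dx̂. -/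
open MeasureTheory

variable {d : ℕ}

local notation "E" => (Fin d → ℝ)

noncomputable def pmat (A : E →L[ℝ] E) : Matrix (Fin d) (Fin d) ℝ :=
  LinearMap.toMatrix' (A : E →ₗ[ℝ] E)

lemma pmat_apply (A : E →L[ℝ] E) (i j : Fin d) : pmat A i j = A (Pi.single j 1) i := by
  rw [pmat, LinearMap.toMatrix'_apply]
  have : (fun j' => if j' = j then (1:ℝ) else 0) = Pi.single j 1 := by
    ext k; simp [Pi.single_apply]
  rfl

lemma pdet_eq (A : E →L[ℝ] E) : A.det = (pmat A).det :=
  (LinearMap.det_toMatrix' _).symm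

lemma pmat_comp (A B : E →L[ℝ] E) : pmat (A.comp B) = pmat A * pmat B := by
  rw [pmat, pmat, pmat, ← LinearMap.toMatrix'_comp]
  rfl

lemma sum_single_smul (w : E) : ∑ i, w i • (Pi.single i 1 : E) = w := by
  ext j
  simp [Finset.sum_apply, Pi.single_apply]

lemma trace_sum_eq (A : E →L[ℝ] E) : (pmat A).trace = ∑ i, A (Pi.single i 1) i := by
  simp [Matrix.trace, Matrix.diag, pmat_apply]

lemma trace_comm_clm (f g : E →L[ℝ] E) :
    ∑ i, f (g (Pi.single i 1)) i = ∑ i, g (f (Pi.single i 1)) i := by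
  have h1 : ∑ i, f (g (Pi.single i 1)) i = (pmat (f.comp g)).trace := by
    rw [trace_sum_eq]; rfl
  have h2 : ∑ i, g (f (Pi.single i 1)) i = (pmat (g.comp f)).trace := by
    rw [trace_sum_eq]; rfl
  rw [h1, h2, pmat_comp, pmat_comp, Matrix.trace_mul_comm]

lemma differentiable_clm_det :
    Differentiable ℝ (fun A : E →L[ℝ] E => A.det) := by
  have hrw : (fun A : E →L[ℝ] E => A.det)
      = fun A => ∑ σ : Equiv.Perm (Fin d),
          ((Equiv.Perm.sign σ : ℤ) : ℝ) * ∏ i, A (Pi.single i 1) (σ i) := by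
    funext A
    rw [pdet_eq, Matrix.det_apply']
    simp only [pmat_apply]
  rw [hrw]
  refine Differentiable.fun_sum fun σ _ => Differentiable.const_mul ?_ _
  intro A
  have := HasFDerivAt.finset_prod (u := Finset.univ) (x := A)
    (g := fun i (A : E →L[ℝ] E) => A (Pi.single i 1) (σ i))
    (g' := fun i => (ContinuousLinearMap.proj (σ i)).comp
      (ContinuousLinearMap.apply ℝ E (Pi.single i 1)))
    (fun i _ => by
      have h : HasFDerivAt (fun A : E →L[ℝ] E => A (Pi.single i 1) (σ i))
          ((ContinuousLinearMap.proj (σ i)).comp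
            (ContinuousLinearMap.apply ℝ E (Pi.single i 1))) A := by
        simpa [ContinuousLinearMap.coe_comp', Function.comp_def] using
          (((ContinuousLinearMap.proj (σ i)).comp
            (ContinuousLinearMap.apply ℝ E (Pi.single i 1)))).hasFDerivAt (x := A)
      exact h)
  exact this.differentiableAt

/-- directional derivative of det along a line through an invertible matrix -/
lemma det_line_hasDerivAt (A B : Matrix (Fin d) (Fin d) ℝ) (hA : IsUnit A.det) :
    HasDerivAt (fun t : ℝ => (A + t • B).det) (A.det * (A⁻¹ * B).trace) 0 := by
  set M := A⁻¹ * B with hM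
  have key : ∀ t : ℝ, (A + t • B).det
      = A.det * (1 + M.trace * t +
          ((1 + (Polynomial.X : Polynomial ℝ) • M.map Polynomial.C).det).divX.divX.eval t * t ^ 2) := by
    intro t
    have h1 : A + t • B = A * (1 + t • M) := by
      rw [hM, Matrix.mul_add, mul_one, Matrix.mul_smul, ← Matrix.mul_assoc,
        Matrix.mul_nonsing_inv A hA, Matrix.one_mul]
    rw [h1, Matrix.det_mul, Matrix.det_one_add_smul]
  have h2 : HasDerivAt (fun t : ℝ => 1 + M.trace * t +
      ((1 + (Polynomial.X : Polynomial ℝ) • M.map Polynomial.C).det).divX.divX.eval t * t ^ 2)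
      M.trace 0 := by
    have c1 : HasDerivAt (fun t : ℝ => 1 + M.trace * t) M.trace 0 := by
      simpa using ((hasDerivAt_id (0:ℝ)).const_mul M.trace).const_add 1
    have c2 : HasDerivAt (fun t : ℝ =>
        ((1 + (Polynomial.X : Polynomial ℝ) • M.map Polynomial.C).det).divX.divX.eval t * t ^ 2)
        0 0 := by
      have := (Polynomial.hasDerivAt ((1 + (Polynomial.X : Polynomial ℝ) • M.map Polynomial.C).det).divX.divX (0:ℝ)).mul
        (hasDerivAt_pow 2 (0:ℝ))
      simpa [Pi.mul_def] using this
    simpa [Pi.add_def] using c1.add c2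
  have h3 := h2.const_mul A.det
  simp only [mul_comm] at h3 ⊢
  refine HasDerivAt.congr_deriv (h3.congr_of_eventuallyEq ?_) (by ring)
  filter_upwards with t
  rw [key t]
  ring

lemma pmat_add (A B : E →L[ℝ] E) : pmat (A + B) = pmat A + pmat B := by
  simp [pmat]

lemma pmat_smul (t : ℝ) (B : E →L[ℝ] E) : pmat (t • B) = t • pmat B := by
  simp [pmat]

lemma pmat_inv (A : E ≃L[ℝ] E) : (pmat (A : E →L[ℝ] E))⁻¹ = pmat (A.symm : E →L[ℝ] E) := by
  apply Matrix.inv_eq_left_inv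
  rw [← pmat_comp]
  have h : ((A.symm : E →L[ℝ] E).comp (A : E →L[ℝ] E)) = ContinuousLinearMap.id ℝ E := by
    ext x i
    simp
  rw [h]
  ext i j
  rw [pmat_apply]
  simp [Matrix.one_apply, Pi.single_apply, eq_comm]

lemma fderiv_clm_det_apply (A : E ≃L[ℝ] E) (B : E →L[ℝ] E) :
    fderiv ℝ (fun A : E →L[ℝ] E => A.det) (A : E →L[ℝ] E) B
      = (A : E →L[ℝ] E).det * ∑ i, A.symm (B (Pi.single i 1)) i := by
  have hdetA : (pmat (A : E →L[ℝ] E)).det ≠ 0 := by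
    rw [← pdet_eq]
    exact A.toLinearEquiv.isUnit_det'.ne_zero
  have h0 : (A : E →L[ℝ] E) + (0:ℝ) • B = (A : E →L[ℝ] E) := by simp
  have hline : HasDerivAt (fun t : ℝ => (A : E →L[ℝ] E) + t • B) B 0 := by
    simpa using ((hasDerivAt_id (0:ℝ)).smul_const B).const_add (A : E →L[ℝ] E)
  have hd : HasFDerivAt (fun A : E →L[ℝ] E => A.det)
      (fderiv ℝ (fun A : E →L[ℝ] E => A.det) (A : E →L[ℝ] E))
      ((A : E →L[ℝ] E) + (0:ℝ) • B) := by
    rw [h0]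
    exact (differentiable_clm_det ((A : E →L[ℝ] E))).hasFDerivAt
  have h1 : HasDerivAt (fun t : ℝ => ((A : E →L[ℝ] E) + t • B).det)
      (fderiv ℝ (fun A : E →L[ℝ] E => A.det) (A : E →L[ℝ] E) B) 0 :=
    by have := hd.comp_hasDerivAt 0 hline; exact this
  have h2 : HasDerivAt (fun t : ℝ => ((A : E →L[ℝ] E) + t • B).det)
      ((pmat (A : E →L[ℝ] E)).det * (((pmat (A : E →L[ℝ] E))⁻¹ * pmat B).trace)) 0 := by
    have key := det_line_hasDerivAt (pmat (A : E →L[ℝ] E)) (pmat B)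
      (isUnit_iff_ne_zero.2 hdetA)
    have heq : (fun t : ℝ => (pmat (A : E →L[ℝ] E) + t • pmat B).det)
        = fun t : ℝ => ((A : E →L[ℝ] E) + t • B).det := by
      funext t
      rw [← pmat_smul, ← pmat_add, ← pdet_eq]
    rwa [heq] at key
  have h3 := h1.unique h2
  rw [h3, ← pdet_eq, pmat_inv, ← pmat_comp, trace_sum_eq]
  rfl

lemma claim2 (A : E ≃L[ℝ] E) (H : E →L[ℝ] E →L[ℝ] E)
    (hsymm : ∀ a b : E, H a b = H b a) (w : E) :
    ∑ i, (∑ j, A.symm (H (A.symm (Pi.single i 1)) (Pi.single j 1)) j)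
        * ((A : E →L[ℝ] E) w) i
      = ∑ i, H (A.symm (Pi.single i 1)) w i := by
  set e : Fin d → E := fun i => Pi.single i 1 with he
  set L : Fin d → (E →L[ℝ] ℝ) := fun j => (ContinuousLinearMap.proj j).comp
    (((A.symm : E →L[ℝ] E).comp (H (e j))).comp (A.symm : E →L[ℝ] E)) with hL
  have hLapp : ∀ j x, L j x = A.symm (H (e j) (A.symm x)) j := fun j x => rfl
  calc ∑ i, (∑ j, A.symm (H (A.symm (e i)) (e j)) j) * ((A : E →L[ℝ] E) w) i
      = ∑ i, ∑ j, ((A : E →L[ℝ] E) w) i * L j (e i) := by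
        refine Finset.sum_congr rfl fun i _ => ?_
        rw [Finset.sum_mul]
        refine Finset.sum_congr rfl fun j _ => ?_
        rw [hLapp, hsymm (A.symm (e i)) (e j), mul_comm]
    _ = ∑ j, ∑ i, ((A : E →L[ℝ] E) w) i * L j (e i) := Finset.sum_comm
    _ = ∑ j, L j ((A : E →L[ℝ] E) w) := by
        refine Finset.sum_congr rfl fun j _ => ?_
        have : ∀ i, ((A : E →L[ℝ] E) w) i * L j (e i)
            = L j (((A : E →L[ℝ] E) w) i • e i) := by
          intro i
          rw [_root_.map_smul, smul_eq_mul]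
        simp_rw [this]
        rw [← map_sum, sum_single_smul]
    _ = ∑ j, A.symm (H (e j) w) j := by
        refine Finset.sum_congr rfl fun j _ => ?_
        rw [hLapp]
        have hw : A.symm ((A : E →L[ℝ] E) w) = w := A.symm_apply_apply w
        rw [hw]
    _ = ∑ j, H (A.symm (e j)) w j := by
        have := trace_comm_clm (A.symm : E →L[ℝ] E) (H.flip w)
        simpa [ContinuousLinearMap.flip_apply] using this

lemma piola_pointwise {Khat U W : Set E}
    (hKhat : IsOpen Khat) (hU : IsOpen U) (hW : IsOpen W)
    {T vhat v : E → E}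
    (hT : ContDiffOn ℝ 2 T U)
    (hvhat : ContDiffOn ℝ 1 vhat W)
    (hTinj : Set.InjOn T Khat)
    (hv : ∀ xh ∈ Khat, v (T xh) = ((fderiv ℝ T xh).det)⁻¹ • fderiv ℝ T xh (vhat xh))
    {x₀ : E} (hx₀ : x₀ ∈ Khat) (hx₀U : x₀ ∈ U) (hx₀W : x₀ ∈ W)
    (hdet : (fderiv ℝ T x₀).det ≠ 0) :
    pdiv v (T x₀) = ((fderiv ℝ T x₀).det)⁻¹ * pdiv vhat x₀ := by
  -- differentiability of T on U
  have hTdiffU : ∀ y ∈ U, HasFDerivAt T (fderiv ℝ T y) y := fun y hy =>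
    ((hT.differentiableOn (by norm_num)).differentiableAt (hU.mem_nhds hy)).hasFDerivAt
  -- fderiv T is C¹ on U
  have hJC1 : ContDiffOn ℝ 1 (fderiv ℝ T) U := by
    have h2 : ContDiffOn ℝ ((1 : WithTop ℕ∞) + 1) T U := by exact_mod_cast hT
    exact ((contDiffOn_succ_iff_fderiv_of_isOpen hU).1 h2).2.2
  have hJdiff : DifferentiableAt ℝ (fderiv ℝ T) x₀ :=
    (hJC1.differentiableOn one_ne_zero).differentiableAt (hU.mem_nhds hx₀U)
  set J₀ : E →L[ℝ] E := fderiv ℝ T x₀ with hJ₀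
  set Hd : E →L[ℝ] E →L[ℝ] E := fderiv ℝ (fderiv ℝ T) x₀ with hHd
  have HH : HasFDerivAt (fderiv ℝ T) Hd x₀ := hJdiff.hasFDerivAt
  have hHsymm : ∀ a b : E, Hd a b = Hd b a := fun a b =>
    second_derivative_symmetric_of_eventually
      (by filter_upwards [hU.mem_nhds hx₀U] with y hy; exact hTdiffU y hy) HH a b
  -- invertible derivative as a continuous linear equiv
  set Ae : E ≃L[ℝ] E :=
    (LinearMap.equivOfDetNeZero (J₀ : E →ₗ[ℝ] E) hdet).toContinuousLinearEquiv with hAedef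
  have hAe : (Ae : E →L[ℝ] E) = J₀ := by ext x; rfl
  have hstrict : HasStrictFDerivAt T (Ae : E →L[ℝ] E) x₀ := by
    rw [hAe]
    exact (hT.contDiffAt (hU.mem_nhds hx₀U)).hasStrictFDerivAt two_ne_zero
  set Tinv : E → E := HasStrictFDerivAt.localInverse T Ae x₀ hstrict with hTinvdef
  have hTinvStrict : HasStrictFDerivAt Tinv (Ae.symm : E →L[ℝ] E) (T x₀) :=
    hstrict.to_localInverse
  -- the Piola transform expression
  set F : E → E := fun x => ((fderiv ℝ T x).det)⁻¹ • fderiv ℝ T x (vhat x) with hFdef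
  -- v equals F ∘ Tinv near T x₀
  have hveq : v =ᶠ[nhds (T x₀)] F ∘ Tinv := by
    have ev1 : ∀ᶠ y in nhds (T x₀), T (Tinv y) = y := hstrict.eventually_right_inverse
    have ev2 : ∀ᶠ y in nhds (T x₀), Tinv y ∈ Khat :=
      hstrict.localInverse_tendsto.eventually_mem (hKhat.mem_nhds hx₀)
    have ev3 : ∀ᶠ y in nhds (T x₀), y ∈ T '' Khat := by
      have : T '' Khat ∈ Filter.map T (nhds x₀) := Filter.image_mem_map (hKhat.mem_nhds hx₀)
      rw [hstrict.map_nhds_eq_of_equiv] at this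
      exact this
    filter_upwards [ev1, ev2, ev3] with y h1 h2 h3
    obtain ⟨xh, hxh, rfl⟩ := h3
    have hinv : Tinv (T xh) = xh := hTinj h2 hxh h1
    rw [Function.comp_apply, hinv, hv xh hxh]
  -- derivative of F at x₀
  set Dv : E →L[ℝ] E := fderiv ℝ vhat x₀ with hDv
  have hvd : HasFDerivAt vhat Dv x₀ :=
    ((hvhat.differentiableOn one_ne_zero).differentiableAt (hW.mem_nhds hx₀W)).hasFDerivAt
  set Ddet : (E →L[ℝ] E) →L[ℝ] ℝ := fderiv ℝ (fun A : E →L[ℝ] E => A.det) J₀ with hDdet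
  have hdet' : HasFDerivAt (fun A : E →L[ℝ] E => A.det) Ddet J₀ :=
    (differentiable_clm_det J₀).hasFDerivAt
  have hg : HasFDerivAt (fun x => (fderiv ℝ T x).det) (Ddet.comp Hd) x₀ :=
    hdet'.comp x₀ HH
  have hginv : HasFDerivAt (fun x => ((fderiv ℝ T x).det)⁻¹)
      ((-(ContinuousLinearMap.mulLeftRight ℝ ℝ (J₀.det)⁻¹ (J₀.det)⁻¹)).comp
        (Ddet.comp Hd)) x₀ :=
    (hasFDerivAt_inv' hdet).comp x₀ hg
  have happ : HasFDerivAt (fun x => fderiv ℝ T x (vhat x))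
      (J₀.comp Dv + Hd.flip (vhat x₀)) x₀ := HH.clm_apply hvd
  set DF : E →L[ℝ] E :=
    (J₀.det)⁻¹ • (J₀.comp Dv + Hd.flip (vhat x₀)) +
      ((-(ContinuousLinearMap.mulLeftRight ℝ ℝ (J₀.det)⁻¹ (J₀.det)⁻¹)).comp
        (Ddet.comp Hd)).smulRight (J₀ (vhat x₀)) with hDF
  have hF : HasFDerivAt F DF x₀ := hginv.smul happ
  -- fderiv of v at T x₀
  have hx0inv : Tinv (T x₀) = x₀ := hstrict.localInverse_apply_image
  have hFcomp : HasFDerivAt (F ∘ Tinv) (DF.comp (Ae.symm : E →L[ℝ] E)) (T x₀) := by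
    refine HasFDerivAt.comp (T x₀) ?_ hTinvStrict.hasFDerivAt
    rw [hx0inv]
    exact hF
  have hfd : fderiv ℝ v (T x₀) = DF.comp (Ae.symm : E →L[ℝ] E) := by
    rw [hveq.fderiv_eq]
    exact hFcomp.fderiv
  -- expand
  have hDdetH : ∀ h : E, Ddet (Hd h) = J₀.det * ∑ j, Ae.symm (Hd h (Pi.single j 1)) j := by
    intro h
    have h' := fderiv_clm_det_apply Ae (Hd h)
    rw [hAe] at h'
    exact h'
  set w : E := vhat x₀ with hw
  have key : ∀ i, (DF.comp (Ae.symm : E →L[ℝ] E)) (Pi.single i 1) i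
      = (J₀.det)⁻¹ * ((J₀ (Dv (Ae.symm (Pi.single i 1)))) i
            + (Hd (Ae.symm (Pi.single i 1)) w) i)
        - (J₀.det)⁻¹ * (J₀.det)⁻¹
            * (Ddet (Hd (Ae.symm (Pi.single i 1))) * (J₀ w) i) := by
    intro i
    simp only [hDF, ContinuousLinearMap.coe_comp', Function.comp_apply,
      ContinuousLinearMap.add_apply, ContinuousLinearMap.coe_smul', Pi.smul_apply,
      ContinuousLinearMap.smulRight_apply, ContinuousLinearMap.neg_apply,
      ContinuousLinearMap.mulLeftRight_apply, ContinuousLinearMap.flip_apply,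
      Pi.add_apply, smul_eq_mul, Pi.neg_apply, ContinuousLinearEquiv.coe_coe]
    ring
  have hS1 : ∑ i, (J₀ (Dv (Ae.symm (Pi.single i 1)))) i = pdiv vhat x₀ := by
    have h := trace_comm_clm J₀ (Dv.comp (Ae.symm : E →L[ℝ] E))
    simp only [ContinuousLinearMap.coe_comp', Function.comp_apply,
      ContinuousLinearEquiv.coe_coe] at h
    rw [h]
    simp only [pdiv]
    refine Finset.sum_congr rfl fun i _ => ?_
    rw [← hAe]
    simp only [ContinuousLinearEquiv.coe_coe, Ae.symm_apply_apply]
    rfl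
  have hS3 : ∑ i, Ddet (Hd (Ae.symm (Pi.single i 1))) * (J₀ w) i
      = J₀.det * ∑ i, Hd (Ae.symm (Pi.single i 1)) w i := by
    have hc := claim2 Ae Hd hHsymm w
    rw [hAe] at hc
    calc ∑ i, Ddet (Hd (Ae.symm (Pi.single i 1))) * (J₀ w) i
        = ∑ i, J₀.det * ((∑ j, Ae.symm (Hd (Ae.symm (Pi.single i 1)) (Pi.single j 1)) j)
            * (J₀ w) i) := by
          refine Finset.sum_congr rfl fun i _ => ?_
          rw [hDdetH]
          ring
      _ = J₀.det * ∑ i, (∑ j, Ae.symm (Hd (Ae.symm (Pi.single i 1)) (Pi.single j 1)) j)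
            * (J₀ w) i := by rw [Finset.mul_sum]
      _ = J₀.det * ∑ i, Hd (Ae.symm (Pi.single i 1)) w i := by rw [hc]
  have hfinal : pdiv v (T x₀) = ∑ i, (DF.comp (Ae.symm : E →L[ℝ] E)) (Pi.single i 1) i := by
    simp only [pdiv, hfd]
  rw [hfinal]
  calc ∑ i, (DF.comp (Ae.symm : E →L[ℝ] E)) (Pi.single i 1) i
      = ∑ i, ((J₀.det)⁻¹ * ((J₀ (Dv (Ae.symm (Pi.single i 1)))) i
            + (Hd (Ae.symm (Pi.single i 1)) w) i)
          - (J₀.det)⁻¹ * (J₀.det)⁻¹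
            * (Ddet (Hd (Ae.symm (Pi.single i 1))) * (J₀ w) i)) :=
        Finset.sum_congr rfl fun i _ => key i
    _ = (J₀.det)⁻¹ * ((∑ i, (J₀ (Dv (Ae.symm (Pi.single i 1)))) i)
            + ∑ i, (Hd (Ae.symm (Pi.single i 1)) w) i)
        - (J₀.det)⁻¹ * (J₀.det)⁻¹
            * ∑ i, Ddet (Hd (Ae.symm (Pi.single i 1))) * (J₀ w) i := by
        rw [Finset.sum_sub_distrib, ← Finset.mul_sum, ← Finset.mul_sum,
          Finset.sum_add_distrib]
    _ = (J₀.det)⁻¹ * (pdiv vhat x₀ + ∑ i, (Hd (Ae.symm (Pi.single i 1)) w) i)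
        - (J₀.det)⁻¹ * (J₀.det)⁻¹
            * (J₀.det * ∑ i, Hd (Ae.symm (Pi.single i 1)) w i) := by
        rw [hS1, hS3]
    _ = (J₀.det)⁻¹ * pdiv vhat x₀ := by
        field_simp
        ring


/-- The contravariant Piola transform preserves divergence, integral form:
if `T` is `C²` on an open neighbourhood of the closure of the bounded open set `K̂`,
maps `K̂` diffeomorphically onto the open set `K` with `det DT > 0` on the closure
of `K̂`, `v̂` is `C¹` on an open neighbourhood of the closure of `K̂`, `q̂` is
continuous and bounded on `K̂`, and `v`, `q` are the (Piola-, composition-)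
push-forwards of `v̂`, `q̂`, then `∫_K (div v) q dx = ∫_{K̂} (div v̂) q̂ dx̂`. -/
theorem piola_preserves_divergence_integral {d : ℕ}
    (Khat K U W : Set (Fin d → ℝ))
    (hKhat : IsOpen Khat) (hKhatBdd : Bornology.IsBounded Khat) (hK : IsOpen K)
    (hU : IsOpen U) (hUK : closure Khat ⊆ U)
    (hW : IsOpen W) (hWK : closure Khat ⊆ W)
    (T : (Fin d → ℝ) → (Fin d → ℝ))
    (hT : ContDiffOn ℝ 2 T U)
    (hTbij : Set.BijOn T Khat K)
    (hJ : ∀ xh ∈ closure Khat, 0 < (fderiv ℝ T xh).det)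
    (vhat : (Fin d → ℝ) → (Fin d → ℝ))
    (hvhat : ContDiffOn ℝ 1 vhat W)
    (qhat : (Fin d → ℝ) → ℝ)
    (hqhat : ContinuousOn qhat Khat) (hqhatBdd : ∃ M : ℝ, ∀ xh ∈ Khat, |qhat xh| ≤ M)
    (v : (Fin d → ℝ) → (Fin d → ℝ)) (q : (Fin d → ℝ) → ℝ)
    (hv : ∀ xh ∈ Khat,
      v (T xh) = ((fderiv ℝ T xh).det)⁻¹ • fderiv ℝ T xh (vhat xh))
    (hq : ∀ xh ∈ Khat, q (T xh) = qhat xh) :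
    ∫ x in K, pdiv v x * q x = ∫ xh in Khat, pdiv vhat xh * qhat xh := by
  have hKeq : K = T '' Khat := hTbij.image_eq.symm
  have hTW : ∀ x ∈ Khat, HasFDerivWithinAt T (fderiv ℝ T x) Khat x := fun x hx =>
    (((hT.differentiableOn (by norm_num)).differentiableAt
      (hU.mem_nhds (hUK (subset_closure hx)))).hasFDerivAt).hasFDerivWithinAt
  rw [hKeq, integral_image_eq_integral_abs_det_fderiv_smul volume hKhat.measurableSet
    hTW hTbij.injOn]
  refine setIntegral_congr_fun hKhat.measurableSet fun x hx => ?_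
  have hdetpos := hJ x (subset_closure hx)
  have hdet : (fderiv ℝ T x).det ≠ 0 := ne_of_gt hdetpos
  have hpt := piola_pointwise hKhat hU hW hT hvhat hTbij.injOn hv hx
    (hUK (subset_closure hx)) (hWK (subset_closure hx)) hdet
  rw [smul_eq_mul, hpt, hq x hx, abs_of_pos hdetpos]
  field_simp
end

section
/- Let d ≥ 1 and k ≥ 0 be integers. Define the Raviart–Thomas set RT_k to be the set of d-tuples (v_1, …, v_d) of real polynomials in variables x_1, …, x_d such that for each i, the degree of v_i in the variable x_i is at most k + 1 and the degree of v_i in every other variable x_j (j ≠ i) is at most k. Define Q_k to be the set of real polynomials in x_1, …, x_d whose degree in each variable is at most k. Then { ∑_{i=1}^d ∂v_i/∂x_i : (v_1, …, v_d) ∈ RT_k } = Q_k; that is, the divergence of every element of RT_k lies in Q_k, and every element of Q_k is the divergence of some element of RT_k. -/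
open MvPolynomial

private lemma degreeOf_monomial_le {σ R : Type*} [CommSemiring R] [DecidableEq σ]
    (j : σ) (s : σ →₀ ℕ) (a : R) : degreeOf j (monomial s a) ≤ s j := by
  by_cases ha : a = 0
  · simp [ha]
  · rw [degreeOf_monomial_eq s j ha]

private lemma degreeOf_pderiv_le {σ R : Type*} [CommSemiring R] [DecidableEq σ]
    (i j : σ) (p : MvPolynomial σ R) {n : ℕ}
    (h : ∀ m ∈ p.support, ((m - Finsupp.single i 1 : σ →₀ ℕ) j) ≤ n) :
    degreeOf j (pderiv i p) ≤ n := by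
  conv_lhs => rw [p.as_sum]
  rw [map_sum]
  refine (degreeOf_sum_le j _ _).trans (Finset.sup_le fun m hm => ?_)
  rw [pderiv_monomial]
  exact (degreeOf_monomial_le j _ _).trans (h m hm)

/-- Antiderivative with respect to variable `i`. -/
noncomputable def antideriv {d : ℕ} (i : Fin d) (q : MvPolynomial (Fin d) ℝ) :
    MvPolynomial (Fin d) ℝ :=
  ∑ m ∈ q.support, monomial (m + Finsupp.single i 1) (q.coeff m / (m i + 1))

lemma pderiv_antideriv {d : ℕ} (i : Fin d) (q : MvPolynomial (Fin d) ℝ) :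
    pderiv i (antideriv i q) = q := by
  rw [antideriv, map_sum]
  conv_rhs => rw [q.as_sum]
  refine Finset.sum_congr rfl fun m _ => ?_
  rw [pderiv_monomial]
  have h1 : (m + Finsupp.single i 1) - Finsupp.single i 1 = m := by
    ext j; simp [Finsupp.single_apply]
  have h2 : ((m + Finsupp.single i 1 : Fin d →₀ ℕ)) i = m i + 1 := by simp
  rw [h1, h2]
  congr 1
  push_cast
  field_simp

lemma degreeOf_antideriv_le {d k : ℕ} (i j : Fin d) (q : MvPolynomial (Fin d) ℝ)
    (hq : degreeOf j q ≤ k) :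
    degreeOf j (antideriv i q) ≤ k + (if j = i then 1 else 0) := by
  refine (degreeOf_sum_le j _ _).trans (Finset.sup_le fun m hm => ?_)
  refine (degreeOf_monomial_le j _ _).trans ?_
  have hm' : m j ≤ k := le_trans (monomial_le_degreeOf j hm) hq
  simp only [Finsupp.add_apply, Finsupp.single_apply]
  by_cases h : j = i
  · simp [h, eq_comm] at *; omega
  · simp [h, Ne.symm h] at *; omega

/-- `∇·RT_k = Q_k`: the divergence of every element of the Raviart–Thomas set `RT_k`
(in which the `i`-th component has degree at most `k + 1` in `x_i` and at most `k` in
every other variable) has degree at most `k` in each variable, and conversely every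
polynomial of degree at most `k` in each variable is the divergence of an element of
`RT_k`. -/
theorem divergence_RTk_eq_Qk {d k : ℕ} (hd : 1 ≤ d) :
    (∀ v : Fin d → MvPolynomial (Fin d) ℝ,
      (∀ i, degreeOf i (v i) ≤ k + 1 ∧ ∀ j, j ≠ i → degreeOf j (v i) ≤ k) →
      ∀ j, degreeOf j (∑ i, pderiv i (v i)) ≤ k) ∧
    (∀ q : MvPolynomial (Fin d) ℝ, (∀ j, degreeOf j q ≤ k) →
      ∃ v : Fin d → MvPolynomial (Fin d) ℝ,
        (∀ i, degreeOf i (v i) ≤ k + 1 ∧ ∀ j, j ≠ i → degreeOf j (v i) ≤ k) ∧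
        ∑ i, pderiv i (v i) = q) := by
  constructor
  · intro v hv j
    refine (degreeOf_sum_le j _ _).trans (Finset.sup_le fun i _ => ?_)
    refine degreeOf_pderiv_le i j (v i) fun m hm => ?_
    by_cases h : j = i
    · subst h
      have := le_trans (monomial_le_degreeOf j hm) (hv j).1
      simp [Finsupp.single_apply]
      omega
    · have := le_trans (monomial_le_degreeOf j hm) ((hv i).2 j h)
      simp [Finsupp.single_apply, h]
      omega
  · intro q hq
    set i₀ : Fin d := ⟨0, hd⟩
    refine ⟨fun i => if i = i₀ then antideriv i₀ q else 0, fun i => ?_, ?_⟩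
    · by_cases h : i = i₀
      · subst h
        simp only [if_pos rfl]
        constructor
        · have := degreeOf_antideriv_le i₀ i₀ q (hq i₀)
          simpa using this
        · intro j hj
          have := degreeOf_antideriv_le i₀ j q (hq j)
          simpa [hj] using this
      · simp [h]
    · rw [Finset.sum_eq_single i₀]
      · simp [pderiv_antideriv]
      · intro i _ h; simp [h]
      · simp
end

section
/- Define v : ℝ² → ℝ² by v(x_1, x_2) := (x_1 − 2 x_1 x_2, 0). Each component of v is a polynomial of degree at most 1 in each variable. Then ∫_{(0,1)²} (div v)(x) q dx = 0 for every constant q ∈ ℝ, yet div v (which equals 1 − 2x_2) is not identically zero on (0,1)². Hence v is discretely divergence-free against piecewise-constant pressures on the unit square but is not divergence-free. -/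
open MeasureTheory ContinuousLinearMap

noncomputable def Lv (x : Fin 2 → ℝ) : (Fin 2 → ℝ) →L[ℝ] (Fin 2 → ℝ) :=
  ContinuousLinearMap.pi
    ![(proj 0 : (Fin 2 → ℝ) →L[ℝ] ℝ) - ((2 * x 0) • (proj 1 : (Fin 2 → ℝ) →L[ℝ] ℝ) + x 1 • ((2:ℝ) • (proj 0 : (Fin 2 → ℝ) →L[ℝ] ℝ))), 0]

lemma hasFDerivAt_v (x : Fin 2 → ℝ) :
    HasFDerivAt (fun x : Fin 2 → ℝ => ![x 0 - 2 * x 0 * x 1, (0:ℝ)]) (Lv x) x := by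
  rw [hasFDerivAt_pi']
  intro i
  fin_cases i
  · have h0 : HasFDerivAt (fun x : Fin 2 → ℝ => x 0) ((proj 0 : (Fin 2 → ℝ) →L[ℝ] ℝ)) x := hasFDerivAt_apply 0 x
    have h1 : HasFDerivAt (fun x : Fin 2 → ℝ => x 1) ((proj 1 : (Fin 2 → ℝ) →L[ℝ] ℝ)) x := hasFDerivAt_apply 1 x
    have hc : HasFDerivAt (fun x : Fin 2 → ℝ => 2 * x 0) ((2:ℝ) • (proj 0 : (Fin 2 → ℝ) →L[ℝ] ℝ)) x := h0.const_mul 2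
    have hm := hc.mul h1
    have := h0.sub hm
    convert this using 1
    · ext y; simp
    · rfl
  · have : HasFDerivAt (fun _ : Fin 2 → ℝ => (0:ℝ)) (0 : (Fin 2 → ℝ) →L[ℝ] ℝ) x := hasFDerivAt_const 0 x
    exact this

lemma pdiv_v (v : (Fin 2 → ℝ) → (Fin 2 → ℝ))
    (hv : ∀ x, v x = ![x 0 - 2 * x 0 * x 1, 0]) (x : Fin 2 → ℝ) :
    pdiv v x = 1 - 2 * x 1 := by
  have hveq : v = fun x : Fin 2 → ℝ => ![x 0 - 2 * x 0 * x 1, (0:ℝ)] := funext hv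
  have hd : fderiv ℝ v x = Lv x := by
    rw [hveq]; exact (hasFDerivAt_v x).fderiv
  simp [pdiv, hd, Lv, Fin.sum_univ_two, Pi.single_apply]
  ring

/-- The field `v(x₁, x₂) = (x₁ - 2x₁x₂, 0)` is discretely divergence-free against
constant pressures on the unit square `(0,1)²` (its divergence `1 - 2x₂` integrates
to zero against every constant), but it is not divergence-free. -/
theorem discretely_div_free_not_div_free
    (v : (Fin 2 → ℝ) → (Fin 2 → ℝ))
    (hv : ∀ x, v x = ![x 0 - 2 * x 0 * x 1, 0]) :
    (∀ q : ℝ,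
      ∫ x in Set.pi Set.univ (fun _ : Fin 2 => Set.Ioo (0 : ℝ) 1), pdiv v x * q = 0) ∧
    (∀ x, pdiv v x = 1 - 2 * x 1) ∧
    ¬ (∀ x ∈ Set.pi Set.univ (fun _ : Fin 2 => Set.Ioo (0 : ℝ) 1), pdiv v x = 0) := by
  refine ⟨?_, pdiv_v v hv, ?_⟩
  · intro q
    simp only [pdiv_v v hv]
    have hmp : MeasurePreserving (MeasurableEquiv.piFinTwo fun _ : Fin 2 => ℝ).symm
        volume volume := (volume_preserving_piFinTwo fun _ : Fin 2 => ℝ).symm _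
    rw [← hmp.setIntegral_preimage_emb (MeasurableEquiv.piFinTwo _).symm.measurableEmbedding
        (fun x : Fin 2 → ℝ => (1 - 2 * x 1) * q)
        (Set.pi Set.univ (fun _ : Fin 2 => Set.Ioo (0 : ℝ) 1))]
    have hpre : (MeasurableEquiv.piFinTwo fun _ : Fin 2 => ℝ).symm ⁻¹'
        Set.pi Set.univ (fun _ : Fin 2 => Set.Ioo (0 : ℝ) 1)
        = Set.Ioo (0:ℝ) 1 ×ˢ Set.Ioo (0:ℝ) 1 := by
      ext p
      simp [MeasurableEquiv.piFinTwo, Set.mem_pi, Fin.forall_fin_two, Set.mem_prod]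
    rw [hpre]
    have : ∀ p : ℝ × ℝ,
        (1 - 2 * ((MeasurableEquiv.piFinTwo fun _ : Fin 2 => ℝ).symm p) 1) * q
        = (fun _ : ℝ => (1:ℝ)) p.1 * ((1 - 2 * p.2) * q) := by
      intro p; simp [MeasurableEquiv.piFinTwo]
    rw [show (volume : Measure (ℝ × ℝ)) = (volume : Measure ℝ).prod volume from rfl]
    rw [setIntegral_congr_fun (by measurability) (fun p _ => this p),
      setIntegral_prod_mul (fun _ : ℝ => (1:ℝ)) (fun y : ℝ => (1 - 2 * y) * q)]
    have h2 : ∫ y in Set.Ioo (0:ℝ) 1, (1 - 2 * y) * q = 0 := by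
      rw [← integral_Ioc_eq_integral_Ioo,
        ← intervalIntegral.integral_of_le (by norm_num : (0:ℝ) ≤ 1)]
      have : ∫ y in (0:ℝ)..1, (1 - 2 * y) * q
          = (∫ y in (0:ℝ)..1, (1 - 2 * y)) * q := by
        rw [intervalIntegral.integral_mul_const]
      rw [this]
      have : ∫ y in (0:ℝ)..1, (1 - 2 * y) = 0 := by
        have := intervalIntegral.integral_sub (intervalIntegrable_const (c := (1:ℝ)))
          ((intervalIntegral.intervalIntegrable_id (μ := volume) (a := 0) (b := 1)).const_mul 2)
        rw [this]
        rw [intervalIntegral.integral_const_mul, _root_.integral_id]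
        norm_num
      rw [this, zero_mul]
    rw [h2, mul_zero]
  · intro h
    have hx : (fun _ : Fin 2 => (1/4 : ℝ)) ∈
        Set.pi Set.univ (fun _ : Fin 2 => Set.Ioo (0 : ℝ) 1) := by
      intro i _; norm_num
    have := h _ hx
    rw [pdiv_v v hv] at this
    norm_num at this
end
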